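/- Let $n \geq 2$ be even and let $k, l$ be nonzero integers. If $\gcd(\tfrac{1}{2}n(n-1), k) \cdot \gcd(n(n+1), k) = \gcd(\tfrac{1}{2}n(n-1), l) \cdot \gcd(n(n+1), l)$, then $\gcd(n(n^2-1), k) = \gcd(n(n^2-1), l)$. -/

import Mathlib

lemma key_gcd_lemma (a b m K L : ℕ) (hK : K ≠ 0) (hL : L ≠ 0) (ha : a ≠ 0) (hb : b ≠ 0)
    (hm : m ≠ 0) (hdvd : m ∣ Nat.lcm a b)
    (h : Nat.gcd a K * Nat.gcd b K = Nat.gcd a L * Nat.gcd b L) :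
    Nat.gcd m K = Nat.gcd m L := by
  have hgmK : Nat.gcd m K ≠ 0 := fun h0 => hm (Nat.eq_zero_of_gcd_eq_zero_left h0)
  have hgmL : Nat.gcd m L ≠ 0 := fun h0 => hm (Nat.eq_zero_of_gcd_eq_zero_left h0)
  have hgaK : Nat.gcd a K ≠ 0 := fun h0 => ha (Nat.eq_zero_of_gcd_eq_zero_left h0)
  have hgbK : Nat.gcd b K ≠ 0 := fun h0 => hb (Nat.eq_zero_of_gcd_eq_zero_left h0)
  have hgaL : Nat.gcd a L ≠ 0 := fun h0 => ha (Nat.eq_zero_of_gcd_eq_zero_left h0)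
  have hgbL : Nat.gcd b L ≠ 0 := fun h0 => hb (Nat.eq_zero_of_gcd_eq_zero_left h0)
  have hlcm : Nat.lcm a b ≠ 0 := Nat.lcm_ne_zero ha hb
  apply Nat.eq_of_factorization_eq hgmK hgmL
  intro p
  have hf := congrArg (fun x => Nat.factorization x p) h
  simp only [Nat.factorization_mul hgaK hgbK, Nat.factorization_mul hgaL hgbL,
    Nat.factorization_gcd ha hK, Nat.factorization_gcd hb hK,
    Nat.factorization_gcd ha hL, Nat.factorization_gcd hb hL,
    Finsupp.add_apply, Finsupp.inf_apply] at hf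
  have hle : m.factorization p ≤ (Nat.lcm a b).factorization p :=
    (Nat.factorization_le_iff_dvd hm hlcm).2 hdvd p
  rw [Nat.factorization_lcm ha hb] at hle
  simp only [Finsupp.sup_apply] at hle
  rw [Nat.factorization_gcd hm hK, Nat.factorization_gcd hm hL]
  simp only [Finsupp.inf_apply]
  omega

theorem stmt12 (n : ℕ) (hn : 2 ≤ n) (hne : Even n) (k l : ℤ) (hk : k ≠ 0) (hl : l ≠ 0)
    (h : Int.gcd ((n * (n - 1) / 2 : ℕ) : ℤ) k * Int.gcd ((n * (n + 1) : ℕ) : ℤ) k =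
        Int.gcd ((n * (n - 1) / 2 : ℕ) : ℤ) l * Int.gcd ((n * (n + 1) : ℕ) : ℤ) l) :
    Int.gcd ((n * (n ^ 2 - 1) : ℕ) : ℤ) k = Int.gcd ((n * (n ^ 2 - 1) : ℕ) : ℤ) l := by
  obtain ⟨c, hc⟩ := hne
  have hc2 : n = 2 * c := by omega
  have hc1 : 1 ≤ c := by omega
  set K := k.natAbs with hKdef
  set L := l.natAbs with hLdef
  have hK : K ≠ 0 := fun h0 => hk (Int.natAbs_eq_zero.mp h0)
  have hL : L ≠ 0 := fun h0 => hl (Int.natAbs_eq_zero.mp h0)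
  have hgcd : ∀ (N : ℕ) (z : ℤ), Int.gcd (N : ℤ) z = Nat.gcd N z.natAbs := by
    intro N z; simp [Int.gcd]
  simp only [hgcd] at h ⊢
  -- rewrite the numbers
  have ha : n * (n - 1) / 2 = c * (n - 1) := by
    rw [hc2, mul_assoc]
    exact Nat.mul_div_cancel_left _ (by norm_num)
  have hm : n * (n ^ 2 - 1) = (n - 1) * (n * (n + 1)) := by
    have h1 : n ^ 2 - 1 = (n - 1) * (n + 1) := by
      have : (n - 1) * (n + 1) + 1 = n ^ 2 := by
        obtain ⟨d, hd⟩ : ∃ d, n = d + 2 := ⟨n - 2, by omega⟩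
        subst hd
        show (d + 2 - 1) * (d + 2 + 1) + 1 = (d + 2) ^ 2
        have : d + 2 - 1 = d + 1 := by omega
        rw [this]; ring
      omega
    rw [h1]; ring
  rw [ha] at h
  rw [hm]
  -- key lemma application
  have hane : c * (n - 1) ≠ 0 := Nat.mul_ne_zero (by omega) (by omega)
  have hbne : n * (n + 1) ≠ 0 := Nat.mul_ne_zero (by omega) (by omega)
  have hmne : (n - 1) * (n * (n + 1)) ≠ 0 := Nat.mul_ne_zero (by omega) hbne
  have cop1 : Nat.Coprime (n - 1) n := by
    have h1 : n - 1 + 1 = n := by omega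
    rw [← h1]; simp
  have cop2 : Nat.Coprime (n - 1) (n + 1) := by
    have hd2 : Nat.gcd (n - 1) (n + 1) ∣ 2 := by
      have := Nat.dvd_sub (Nat.gcd_dvd_right (n - 1) (n + 1)) (Nat.gcd_dvd_left (n - 1) (n + 1))
      have h2 : n + 1 - (n - 1) = 2 := by omega
      rwa [h2] at this
    have hodd : ¬ (2 ∣ n - 1) := by omega
    have hdl := Nat.gcd_dvd_left (n - 1) (n + 1)
    rcases (Nat.dvd_prime Nat.prime_two).1 hd2 with h1 | h2
    · exact h1
    · rw [h2] at hdl; exact absurd hdl hodd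
  have cop : Nat.Coprime (n - 1) (n * (n + 1)) := Nat.Coprime.mul_right cop1 cop2
  have hdvd : (n - 1) * (n * (n + 1)) ∣ Nat.lcm (c * (n - 1)) (n * (n + 1)) :=
    Nat.Coprime.mul_dvd_of_dvd_of_dvd cop
      (dvd_trans (dvd_mul_left (n - 1) c) (Nat.dvd_lcm_left _ _))
      (Nat.dvd_lcm_right _ _)
  exact key_gcd_lemma _ _ _ K L hK hL hane hbne hmne hdvd h
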